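/- Let S ⊆ F(X) and T ⊆ F(Y) be Riesz spaces. Then the smallest Lebesgue lattice containing S ⊗ T equals the smallest Lebesgue lattice containing L(S) ⊗ L(T): L(S ⊗ T) = L(L(S) ⊗ L(T)). -/
import Mathlib


open Filter Topology

/-- `Pdom M`: dominated pointwise limits of sequences in `M`
(sequence `f₀, f₁, …` with `|fₙ| ≤ f₀` for `n ≥ 1`, converging pointwise). -/
def Pdom {Z : Type*} (M : Set (Z → ℝ)) : Set (Z → ℝ) :=
  { f | ∃ F : ℕ → Z → ℝ, (∀ n, F n ∈ M) ∧ (∀ n, |F (n + 1)| ≤ F 0) ∧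
      ∀ z, Tendsto (fun n => F n z) atTop (𝓝 (f z)) }

/-- `U` is a vector subspace of the functions `Z → ℝ`. -/
def IsSubspace {Z : Type*} (U : Set (Z → ℝ)) : Prop :=
  (0 : Z → ℝ) ∈ U ∧ (∀ f g, f ∈ U → g ∈ U → f + g ∈ U) ∧
    ∀ (c : ℝ) (f), f ∈ U → c • f ∈ U

/-- A Riesz space of functions: a subspace closed under pointwise absolute value. -/
def IsRiesz {Z : Type*} (R : Set (Z → ℝ)) : Prop :=
  IsSubspace R ∧ ∀ f, f ∈ R → |f| ∈ R

/-- A Lebesgue lattice: a Riesz space closed under dominated pointwise limits. -/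
def IsLebesgue {Z : Type*} (L : Set (Z → ℝ)) : Prop :=
  IsRiesz L ∧ Pdom L ⊆ L

/-- smallest Riesz space containing `M`. -/
def RGen {Z : Type*} (M : Set (Z → ℝ)) : Set (Z → ℝ) :=
  ⋂₀ { R | IsRiesz R ∧ M ⊆ R }

/-- smallest Lebesgue lattice containing `M`. -/
def LGen {Z : Type*} (M : Set (Z → ℝ)) : Set (Z → ℝ) :=
  ⋂₀ { L | IsLebesgue L ∧ M ⊆ L }

/-- Daniell integral on `R`: additive, homogeneous, monotone, continuous under
decreasing convergence to `0`. -/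
def IsDaniell {Z : Type*} (R : Set (Z → ℝ)) (I : (Z → ℝ) → ℝ) : Prop :=
  IsRiesz R ∧
  (∀ f g, f ∈ R → g ∈ R → I (f + g) = I f + I g) ∧
  (∀ (c : ℝ) (f), f ∈ R → I (c • f) = c * I f) ∧
  (∀ f, f ∈ R → I f ≤ I |f|) ∧
  ∀ F : ℕ → Z → ℝ, (∀ n, F n ∈ R) → (∀ n, 0 ≤ F (n + 1)) →
    (∀ n, F (n + 1) ≤ F n) →
    (∀ z, Tendsto (fun n => F n z) atTop (𝓝 0)) →
    Tendsto (fun n => I (F n)) atTop (𝓝 0)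

/-- elementary tensor `(g ⊗ h)(x, y) = g x * h y`. -/
def tensor {X Y : Type*} (g : X → ℝ) (h : Y → ℝ) : X × Y → ℝ :=
  fun p => g p.1 * h p.2

/-- tensor product `V ⊗ W`: finite sums of elementary tensors. -/
def TensorSet {X Y : Type*} (V : Set (X → ℝ)) (W : Set (Y → ℝ)) :
    Set (X × Y → ℝ) :=
  { f | ∃ (k : ℕ) (g : Fin k → X → ℝ) (h : Fin k → Y → ℝ),
      (∀ i, g i ∈ V) ∧ (∀ i, h i ∈ W) ∧ f = ∑ i, tensor (g i) (h i) }

/-- `iterP U m`: `U₁ = U`, `U_{m+1} = P(U_m)` (0-indexed). -/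
def iterP {Z : Type*} (U : Set (Z → ℝ)) : ℕ → Set (Z → ℝ)
  | 0 => U
  | n + 1 => Pdom (iterP U n)


lemma mem_LGen_iff {Z : Type*} {M : Set (Z → ℝ)} {f : Z → ℝ} :
    f ∈ LGen M ↔ ∀ L, IsLebesgue L → M ⊆ L → f ∈ L := by
  simp only [LGen, Set.mem_sInter, Set.mem_setOf_eq, and_imp]

lemma subset_LGen {Z : Type*} (M : Set (Z → ℝ)) : M ⊆ LGen M := by
  intro f hf
  exact mem_LGen_iff.2 fun L _ hM => hM hf

lemma LGen_subset {Z : Type*} {M L : Set (Z → ℝ)} (hL : IsLebesgue L) (hM : M ⊆ L) :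
    LGen M ⊆ L := fun f hf => mem_LGen_iff.1 hf L hL hM

lemma isLebesgue_LGen {Z : Type*} (M : Set (Z → ℝ)) : IsLebesgue (LGen M) := by
  refine ⟨⟨⟨?_, ?_, ?_⟩, ?_⟩, ?_⟩
  · exact mem_LGen_iff.2 fun L hL _ => hL.1.1.1
  · intro f g hf hg
    exact mem_LGen_iff.2 fun L hL hM =>
      hL.1.1.2.1 f g (mem_LGen_iff.1 hf L hL hM) (mem_LGen_iff.1 hg L hL hM)
  · intro c f hf
    exact mem_LGen_iff.2 fun L hL hM => hL.1.1.2.2 c f (mem_LGen_iff.1 hf L hL hM)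
  · intro f hf
    exact mem_LGen_iff.2 fun L hL hM => hL.1.2 f (mem_LGen_iff.1 hf L hL hM)
  · rintro f ⟨F, hF, hdom, hlim⟩
    exact mem_LGen_iff.2 fun L hL hM =>
      hL.2 ⟨F, fun n => mem_LGen_iff.1 (hF n) L hL hM, hdom, hlim⟩

lemma subspaceSub {Z : Type*} {U : Set (Z → ℝ)} (hU : IsSubspace U) {f g : Z → ℝ}
    (hf : f ∈ U) (hg : g ∈ U) : f - g ∈ U := by
  have : f - g = f + (-1 : ℝ) • g := by
    funext z; simp [sub_eq_add_neg]
  rw [this]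
  exact hU.2.1 _ _ hf (hU.2.2 _ _ hg)

lemma pos_part_decomp {Z : Type*} {R : Set (Z → ℝ)} (hR : IsRiesz R) {f : Z → ℝ}
    (hf : f ∈ R) : ∃ p q, p ∈ R ∧ q ∈ R ∧ 0 ≤ p ∧ 0 ≤ q ∧ f = p - q := by
  refine ⟨(1/2 : ℝ) • (|f| + f), (1/2 : ℝ) • (|f| - f), ?_, ?_, ?_, ?_, ?_⟩
  · exact hR.1.2.2 _ _ (hR.1.2.1 _ _ (hR.2 f hf) hf)
  · exact hR.1.2.2 _ _ (subspaceSub hR.1 (hR.2 f hf) hf)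
  · intro z
    simp only [Pi.smul_apply, Pi.add_apply, Pi.abs_apply, Pi.zero_apply, smul_eq_mul]
    nlinarith [neg_abs_le (f z), abs_nonneg (f z)]
  · intro z
    simp only [Pi.smul_apply, Pi.sub_apply, Pi.abs_apply, Pi.zero_apply, smul_eq_mul]
    nlinarith [le_abs_self (f z)]
  · funext z
    simp only [Pi.sub_apply, Pi.smul_apply, Pi.add_apply, Pi.abs_apply, smul_eq_mul]
    ring

lemma tensor_zero_left {X Y : Type*} (h : Y → ℝ) : tensor (0 : X → ℝ) h = 0 := by
  funext p; simp [tensor]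

lemma tensor_zero_right {X Y : Type*} (g : X → ℝ) : tensor g (0 : Y → ℝ) = 0 := by
  funext p; simp [tensor]

lemma tensor_add_left {X Y : Type*} (f g : X → ℝ) (h : Y → ℝ) :
    tensor (f + g) h = tensor f h + tensor g h := by
  funext p; simp [tensor]; ring

lemma tensor_add_right {X Y : Type*} (g : X → ℝ) (h k : Y → ℝ) :
    tensor g (h + k) = tensor g h + tensor g k := by
  funext p; simp [tensor]; ring

lemma tensor_smul_left {X Y : Type*} (c : ℝ) (f : X → ℝ) (h : Y → ℝ) :
    tensor (c • f) h = c • tensor f h := by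
  funext p; simp [tensor]; ring

lemma tensor_smul_right {X Y : Type*} (c : ℝ) (g : X → ℝ) (h : Y → ℝ) :
    tensor g (c • h) = c • tensor g h := by
  funext p; simp [tensor]; ring

lemma tensor_abs_left {X Y : Type*} (f : X → ℝ) {h : Y → ℝ} (hh : 0 ≤ h) :
    tensor |f| h = |tensor f h| := by
  funext p; simp [tensor, abs_mul, abs_of_nonneg (hh p.2)]

lemma tensor_abs_right {X Y : Type*} {g : X → ℝ} (hg : 0 ≤ g) (h : Y → ℝ) :
    tensor g |h| = |tensor g h| := by
  funext p; simp [tensor, abs_mul, abs_of_nonneg (hg p.1)]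

lemma tensor_sub_left {X Y : Type*} (f g : X → ℝ) (h : Y → ℝ) :
    tensor (f - g) h = tensor f h - tensor g h := by
  funext p; simp [tensor]; ring

lemma tensor_sub_right {X Y : Type*} (g : X → ℝ) (h k : Y → ℝ) :
    tensor g (h - k) = tensor g h - tensor g k := by
  funext p; simp [tensor]; ring

/-- For fixed nonneg `h`, the set of `g` with `tensor g h ∈ L` is Lebesgue. -/
lemma lebesgue_left {X Y : Type*} {L : Set (X × Y → ℝ)} (hL : IsLebesgue L)
    {h : Y → ℝ} (hh : 0 ≤ h) : IsLebesgue {g : X → ℝ | tensor g h ∈ L} := by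
  refine ⟨⟨⟨?_, ?_, ?_⟩, ?_⟩, ?_⟩
  · show tensor (0 : X → ℝ) h ∈ L
    rw [tensor_zero_left]; exact hL.1.1.1
  · intro f g hf hg
    show tensor (f + g) h ∈ L
    rw [tensor_add_left]; exact hL.1.1.2.1 _ _ hf hg
  · intro c f hf
    show tensor (c • f) h ∈ L
    rw [tensor_smul_left]; exact hL.1.1.2.2 _ _ hf
  · intro f hf
    show tensor |f| h ∈ L
    rw [tensor_abs_left f hh]; exact hL.1.2 _ hf
  · rintro f ⟨F, hF, hdom, hlim⟩
    show tensor f h ∈ L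
    apply hL.2
    refine ⟨fun n => tensor (F n) h, hF, ?_, ?_⟩
    · intro n p
      rw [← tensor_abs_left (F (n+1)) hh]
      exact mul_le_mul_of_nonneg_right (hdom n p.1) (hh p.2)
    · intro p
      exact (hlim p.1).mul_const (h p.2)

lemma lebesgue_right {X Y : Type*} {L : Set (X × Y → ℝ)} (hL : IsLebesgue L)
    {g : X → ℝ} (hg : 0 ≤ g) : IsLebesgue {h : Y → ℝ | tensor g h ∈ L} := by
  refine ⟨⟨⟨?_, ?_, ?_⟩, ?_⟩, ?_⟩
  · show tensor g (0 : Y → ℝ) ∈ L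
    rw [tensor_zero_right]; exact hL.1.1.1
  · intro f k hf hk
    show tensor g (f + k) ∈ L
    rw [tensor_add_right]; exact hL.1.1.2.1 _ _ hf hk
  · intro c f hf
    show tensor g (c • f) ∈ L
    rw [tensor_smul_right]; exact hL.1.1.2.2 _ _ hf
  · intro f hf
    show tensor g |f| ∈ L
    rw [tensor_abs_right hg f]; exact hL.1.2 _ hf
  · rintro f ⟨F, hF, hdom, hlim⟩
    show tensor g f ∈ L
    apply hL.2
    refine ⟨fun n => tensor g (F n), hF, ?_, ?_⟩
    · intro n p
      rw [← tensor_abs_right hg (F (n+1))]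
      exact mul_le_mul_of_nonneg_left (hdom n p.2) (hg p.1)
    · intro p
      exact (hlim p.2).const_mul (g p.1)

lemma sum_mem_subspace {Z : Type*} {U : Set (Z → ℝ)} (hU : IsSubspace U)
    {k : ℕ} (f : Fin k → Z → ℝ) (hf : ∀ i, f i ∈ U) : ∑ i, f i ∈ U := by
  classical
  refine Finset.sum_induction f (· ∈ U) (fun a b ha hb => hU.2.1 a b ha hb) hU.1 ?_
  exact fun i _ => hf i

theorem stmt18 {X Y : Type*} (S : Set (X → ℝ)) (T : Set (Y → ℝ))
    (hS : IsRiesz S) (hT : IsRiesz T) :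
    LGen (TensorSet S T) = LGen (TensorSet (LGen S) (LGen T)) := by
  have hLST := isLebesgue_LGen (TensorSet S T)
  have hLS := isLebesgue_LGen S
  have hLT := isLebesgue_LGen T
  -- Step 1: for h ∈ T nonneg, g ∈ LGen S : tensor g h ∈ LGen (S ⊗ T)
  have step1 : ∀ h ∈ T, 0 ≤ h → ∀ g ∈ LGen S, tensor g h ∈ LGen (TensorSet S T) := by
    intro h hhT hh g hg
    have hsub : S ⊆ {g : X → ℝ | tensor g h ∈ LGen (TensorSet S T)} := by
      intro g' hg'
      apply subset_LGen
      exact ⟨1, fun _ => g', fun _ => h, fun _ => hg', fun _ => hhT, by simp⟩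
    exact LGen_subset (lebesgue_left hLST hh) hsub hg
  -- Step 1': for h ∈ T arbitrary
  have step1' : ∀ h ∈ T, ∀ g ∈ LGen S, tensor g h ∈ LGen (TensorSet S T) := by
    intro h hhT g hg
    obtain ⟨p, q, hp, hq, hp0, hq0, hpq⟩ := pos_part_decomp hT hhT
    rw [hpq, tensor_sub_right]
    exact subspaceSub hLST.1.1 (step1 p hp hp0 g hg) (step1 q hq hq0 g hg)
  -- Step 2: for g ∈ LGen S nonneg, h ∈ LGen T
  have step2 : ∀ g ∈ LGen S, 0 ≤ g → ∀ h ∈ LGen T, tensor g h ∈ LGen (TensorSet S T) := by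
    intro g hg hg0 h hh
    have hsub : T ⊆ {h : Y → ℝ | tensor g h ∈ LGen (TensorSet S T)} := by
      intro h' hh'
      exact step1' h' hh' g hg
    exact LGen_subset (lebesgue_right hLST hg0) hsub hh
  -- Step 2': general
  have key : ∀ g ∈ LGen S, ∀ h ∈ LGen T, tensor g h ∈ LGen (TensorSet S T) := by
    intro g hg h hh
    obtain ⟨p, q, hp, hq, hp0, hq0, hpq⟩ := pos_part_decomp hLS.1 hg
    rw [hpq, tensor_sub_left]
    exact subspaceSub hLST.1.1 (step2 p hp hp0 h hh) (step2 q hq hq0 h hh)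
  apply Set.Subset.antisymm
  · apply LGen_subset (isLebesgue_LGen _)
    intro f hf
    apply subset_LGen
    obtain ⟨k, g, h, hg, hh, rfl⟩ := hf
    exact ⟨k, g, h, fun i => subset_LGen S (hg i), fun i => subset_LGen T (hh i), rfl⟩
  · apply LGen_subset hLST
    rintro f ⟨k, g, h, hg, hh, rfl⟩
    exact sum_mem_subspace hLST.1.1 _ fun i => key (g i) (hg i) (h i) (hh i)
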